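/- Let n ≥ 1 and let λ : ℂ × ℂ → ℂⁿ be continuous on 𝕋 × {|z| ≤ 1} (where 𝕋 = {ζ ∈ ℂ : |ζ| = 1}) such that for each ζ ∈ 𝕋 the map z ↦ λ(ζ,z) is holomorphic on the open unit disc, continuous on the closed unit disc, and satisfies λ(ζ,0) = 0. Then for every ε > 0 there exist natural numbers m and N ≥ 1 and polynomial maps A₁, …, A_N : ℂ → ℂⁿ (each coordinate a polynomial in ζ) such that sup{ ‖λ(ζ,z) − ζ^{−m} ∑_{j=1}^{N} A_j(ζ) z^j‖ : ζ ∈ 𝕋, |z| ≤ 1 } < ε. -/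

import Mathlib

open MeasureTheory Metric Set

section Helpers
open Polynomial Complex intervalIntegral

open Metric Set Polynomial

local notation "𝕋" => sphere (0:ℂ) 1

lemma sphere_ne_zero (ζ : 𝕋) : (ζ:ℂ) ≠ 0 := by
  have := ζ.2
  simp only [mem_sphere_iff_norm, sub_zero] at this
  intro h; rw [h] at this; simp at this

lemma sphere_inv_eq_conj (ζ : 𝕋) : (ζ:ℂ)⁻¹ = (starRingEnd ℂ) (ζ:ℂ) := by
  have := ζ.2
  simp only [mem_sphere_iff_norm, sub_zero] at this
  exact Complex.inv_eq_conj this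

/-- Laurent polynomials as a star subalgebra of continuous functions on the circle. -/
noncomputable def LaurentAlg : StarSubalgebra ℂ C(𝕋, ℂ) where
  carrier := {f | ∃ (m : ℕ) (q : Polynomial ℂ), ∀ ζ : 𝕋, f ζ = ((ζ:ℂ)⁻¹)^m * q.eval (ζ:ℂ)}
  mul_mem' := by
    rintro f g ⟨m1, q1, h1⟩ ⟨m2, q2, h2⟩
    exact ⟨m1 + m2, q1 * q2, fun ζ => by
      simp only [ContinuousMap.mul_apply, h1 ζ, h2 ζ, eval_mul, pow_add]; ring⟩
  add_mem' := by
    rintro f g ⟨m1, q1, h1⟩ ⟨m2, q2, h2⟩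
    refine ⟨m1 + m2, X^m2 * q1 + X^m1 * q2, fun ζ => ?_⟩
    have hζ := sphere_ne_zero ζ
    simp only [ContinuousMap.add_apply, h1 ζ, h2 ζ, eval_add, eval_mul, eval_pow, eval_X]
    field_simp
    have e1 : (ζ:ℂ)^m1 * ((ζ:ℂ)⁻¹)^m1 = 1 := by rw [← mul_pow, mul_inv_cancel₀ hζ, one_pow]
    have e2 : (ζ:ℂ)^m2 * ((ζ:ℂ)⁻¹)^m2 = 1 := by rw [← mul_pow, mul_inv_cancel₀ hζ, one_pow]
    linear_combination (-(((ζ:ℂ)⁻¹)^m2 * eval (ζ:ℂ) q2)) * e1 + (-(((ζ:ℂ)⁻¹)^m1 * eval (ζ:ℂ) q1)) * e2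
  algebraMap_mem' := fun c => ⟨0, C c, fun ζ => by simp⟩
  star_mem' := by
    rintro f ⟨m, q, h⟩
    set p := q.map (starRingEnd ℂ) with hp
    refine ⟨p.natDegree, X^m * reflect p.natDegree p, fun ζ => ?_⟩
    have hζ := sphere_ne_zero ζ
    have hinv : Invertible ((ζ:ℂ)⁻¹) := invertibleOfNonzero (inv_ne_zero hζ)
    have key : eval₂ (RingHom.id ℂ) (⅟((ζ:ℂ)⁻¹)) (reflect p.natDegree p) * ((ζ:ℂ)⁻¹) ^ p.natDegree
        = eval₂ (RingHom.id ℂ) ((ζ:ℂ)⁻¹) p := eval₂_reflect_mul_pow _ _ _ _ le_rfl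
    have hinvinv : (⅟((ζ:ℂ)⁻¹) : ℂ) = (ζ:ℂ) :=
      invOf_eq_right_inv (inv_mul_cancel₀ hζ)
    rw [hinvinv] at key
    have hpe : p.eval ((ζ:ℂ)⁻¹) = (reflect p.natDegree p).eval (ζ:ℂ) * ((ζ:ℂ)⁻¹) ^ p.natDegree := by
      exact key.symm
    have hstar : (star f : C(𝕋, ℂ)) ζ = (starRingEnd ℂ) (f ζ) := rfl
    have hconj : (starRingEnd ℂ) (q.eval (ζ:ℂ)) = p.eval ((ζ:ℂ)⁻¹) := by
      rw [sphere_inv_eq_conj, hp, eval_map, Polynomial.eval₂_at_apply]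
    rw [hstar, h ζ, map_mul, map_pow, map_inv₀, ← sphere_inv_eq_conj, inv_inv, hconj, hpe]
    simp only [eval_mul, eval_pow, eval_X]
    ring
  one_mem' := ⟨0, 1, fun ζ => by simp⟩
  zero_mem' := ⟨0, 0, fun ζ => by simp⟩

theorem laurent_approx (g : C(𝕋, ℂ)) {δ : ℝ} (hδ : 0 < δ) :
    ∃ (m : ℕ) (q : Polynomial ℂ), ∀ ζ : 𝕋, ‖g ζ - ((ζ:ℂ)⁻¹)^m * q.eval (ζ:ℂ)‖ < δ := by
  have hsep : LaurentAlg.SeparatesPoints := by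
    intro x y hxy
    refine ⟨_, ⟨(⟨fun ζ => (ζ:ℂ), continuous_subtype_val⟩ : C(𝕋, ℂ)),
      ⟨0, X, fun ζ => by simp⟩, rfl⟩, ?_⟩
    simpa [Subtype.ext_iff] using hxy
  have hdense := ContinuousMap.starSubalgebra_topologicalClosure_eq_top_of_separatesPoints
    LaurentAlg hsep
  have hg : g ∈ LaurentAlg.topologicalClosure := by rw [hdense]; trivial
  obtain ⟨f, hfL, hfg⟩ := Metric.mem_closure_iff.mp hg δ hδ
  obtain ⟨m, q, hf⟩ := hfL
  refine ⟨m, q, fun ζ => ?_⟩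
  calc ‖g ζ - ((ζ:ℂ)⁻¹)^m * q.eval (ζ:ℂ)‖ = ‖g ζ - f ζ‖ := by rw [hf ζ]
    _ = dist (g ζ) (f ζ) := (dist_eq_norm _ _).symm
    _ ≤ dist g f := ContinuousMap.dist_apply_le_dist ζ
    _ < δ := hfg

open Metric Set Complex intervalIntegral

lemma geom_tail_bound {E : Type*} [NormedAddCommGroup E] [NormedSpace ℝ E] [CompleteSpace E]
    {a : ℕ → E} {S : E} (h : HasSum a S) {C s : ℝ} (hs0 : 0 ≤ s) (hs1 : s < 1)
    (hb : ∀ k, ‖a k‖ ≤ C * s ^ k) (m : ℕ) :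
    ‖S - ∑ k ∈ Finset.range m, a k‖ ≤ C * s ^ m * (1 - s)⁻¹ := by
  have hsum := h.summable
  have key := Summable.sum_add_tsum_nat_add (f := a) m hsum
  rw [h.tsum_eq] at key
  have hS : S - ∑ k ∈ Finset.range m, a k = ∑' i, a (i + m) :=
    sub_eq_iff_eq_add'.mpr key.symm
  rw [hS]
  refine tsum_of_norm_bounded ((hasSum_geometric_of_lt_one hs0 hs1).mul_left (C * s ^ m))
    (fun i => ?_)
  calc ‖a (i + m)‖ ≤ C * s ^ (i + m) := hb _
    _ = C * s ^ m * s ^ i := by rw [pow_add]; ring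

lemma euclid_norm_lt {n : ℕ} (hn : 0 < n) (v : EuclideanSpace ℂ (Fin n)) {δ : ℝ}
    (h : ∀ i, ‖v i‖ < δ) : ‖v‖ < n * δ := by
  have hδ : 0 < δ := lt_of_le_of_lt (norm_nonneg _) (h ⟨0, hn⟩)
  have hnδ : 0 < (n:ℝ) * δ := by positivity
  rw [EuclideanSpace.norm_eq, Real.sqrt_lt' hnδ]
  calc ∑ i, ‖v i‖ ^ 2 < ∑ _i : Fin n, δ ^ 2 := by
        apply Finset.sum_lt_sum_of_nonempty
        · exact Finset.univ_nonempty_iff.mpr ⟨⟨0, hn⟩⟩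
        · intro i _
          have := h i
          have h0 := norm_nonneg (v i)
          nlinarith
    _ = n * δ ^ 2 := by simp [Finset.sum_const]
    _ ≤ ((n:ℝ) * δ) ^ 2 := by
        have h1 : (1:ℝ) ≤ n := by exact_mod_cast hn
        nlinarith

open Metric Set Complex intervalIntegral

lemma cauchyCoeff_continuous {n : ℕ} (Λ : C(ℂ × ℂ, EuclideanSpace ℂ (Fin n))) {ρ : ℝ}
    (hρ : 0 < ρ) (k : ℕ) :
    Continuous fun ζ : ℂ => (cauchyPowerSeries (fun z => Λ (ζ, z)) 0 ρ k) (fun _ => (1:ℂ)) := by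
  have happ : ∀ ζ : ℂ, (cauchyPowerSeries (fun z => Λ (ζ, z)) 0 ρ k) (fun _ => (1:ℂ)) =
      (2 * Real.pi * I : ℂ)⁻¹ • ∫ θ in (0:ℝ)..2 * Real.pi,
        deriv (circleMap 0 ρ) θ •
          ((1 / (circleMap 0 ρ θ - 0)) ^ k • (circleMap 0 ρ θ - 0)⁻¹ • Λ (ζ, circleMap 0 ρ θ)) :=
    fun ζ => by rw [cauchyPowerSeries_apply]; rfl
  simp only [happ]
  refine (continuous_const_smul ((2 * Real.pi * I : ℂ)⁻¹)).comp ?_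
  apply intervalIntegral.continuous_parametric_intervalIntegral_of_continuous'
  have h1 : Continuous fun p : ℂ × ℝ => circleMap 0 ρ p.2 :=
    (continuous_circleMap 0 ρ).comp continuous_snd
  have h2 : ∀ p : ℂ × ℝ, circleMap 0 ρ p.2 ≠ 0 := fun p => circleMap_ne_center hρ.ne'
  have hΛ : Continuous fun p : ℂ × ℝ => Λ (p.1, circleMap 0 ρ p.2) :=
    Λ.continuous.comp (continuous_fst.prodMk h1)
  have hderiv : Continuous fun p : ℂ × ℝ => deriv (circleMap 0 ρ) p.2 := by
    simp only [deriv_circleMap]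
    exact ((continuous_circleMap 0 ρ).comp continuous_snd).mul continuous_const
  have h2' : ∀ p : ℂ × ℝ, circleMap 0 ρ p.2 - 0 ≠ 0 := fun p => by simpa using h2 p
  have hsub : Continuous fun p : ℂ × ℝ => circleMap 0 ρ p.2 - 0 := h1.sub continuous_const
  exact hderiv.smul (((continuous_const.div hsub h2').pow k).smul ((hsub.inv₀ h2').smul hΛ))
end Helpers

theorem laurent_polynomial_approximation (n : ℕ) (hn : 1 ≤ n)
    (lam : ℂ × ℂ → EuclideanSpace ℂ (Fin n))
    (hlamc : ContinuousOn lam (sphere (0:ℂ) 1 ×ˢ closedBall (0:ℂ) 1))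
    (hlam : ∀ ζ ∈ sphere (0:ℂ) 1,
      ContinuousOn (fun z => lam (ζ, z)) (closedBall 0 1) ∧
      DifferentiableOn ℂ (fun z => lam (ζ, z)) (ball 0 1) ∧
      lam (ζ, 0) = 0)
    (ε : ℝ) (hε : 0 < ε) :
    ∃ (m N : ℕ), 1 ≤ N ∧ ∃ A : Fin N → ℂ → EuclideanSpace ℂ (Fin n),
      (∀ j : Fin N, ∀ i : Fin n, ∃ p : Polynomial ℂ, ∀ ζ : ℂ, A j ζ i = p.eval ζ) ∧
      ∀ ζ ∈ sphere (0:ℂ) 1, ∀ z ∈ closedBall (0:ℂ) 1,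
        ‖lam (ζ, z) - (ζ⁻¹ ^ m) • ∑ j : Fin N, z ^ ((j : ℕ) + 1) • A j ζ‖ < ε := by
  classical
  have hn' : 0 < n := hn
  set K := sphere (0:ℂ) 1 ×ˢ closedBall (0:ℂ) 1 with hK
  have hKc : IsCompact K := (isCompact_sphere 0 1).prod (isCompact_closedBall 0 1)
  have hKcl : IsClosed K := isClosed_sphere.prod isClosed_closedBall
  -- Tietze extension
  obtain ⟨Λ, hΛ⟩ := ContinuousMap.exists_restrict_eq (Y := EuclideanSpace ℂ (Fin n)) hKcl
      ⟨K.restrict lam, hlamc.restrict⟩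
  have hΛK : ∀ x ∈ K, Λ x = lam x := by
    intro x hx
    have h2 := DFunLike.congr_fun hΛ (⟨x, hx⟩ : K)
    exact h2
  -- bound on lam
  obtain ⟨M0, hM0⟩ := hKc.exists_bound_of_continuousOn hlamc
  set M : ℝ := max M0 1 with hMdef
  have hM1 : (0:ℝ) < M := lt_of_lt_of_le one_pos (le_max_right _ _)
  have hM : ∀ x ∈ K, ‖lam x‖ ≤ M := fun x hx => (hM0 x hx).trans (le_max_left _ _)
  -- uniform continuity
  have hUC := hKc.uniformContinuousOn_of_continuous hlamc
  rw [Metric.uniformContinuousOn_iff] at hUC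
  obtain ⟨δ₀, hδ₀, hδ⟩ := hUC (ε/4) (by positivity)
  -- radii
  set r : ℝ := max (1/2) (1 - δ₀/2) with hrdef
  have hr0 : 0 < r := lt_of_lt_of_le one_half_pos (le_max_left _ _)
  have hr1 : r < 1 := max_lt (by norm_num) (by linarith)
  have hrδ : 1 - r ≤ δ₀ / 2 := by
    have := le_max_right (1/2 : ℝ) (1 - δ₀/2)
    linarith
  set ρ : ℝ := (1 + r) / 2 with hρdef
  have hρ0 : 0 < ρ := by positivity
  have hρr : r < ρ := by rw [hρdef]; linarith
  have hρ1 : ρ < 1 := by rw [hρdef]; linarith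
  set ρ' : NNReal := ⟨ρ, hρ0.le⟩ with hρ'def
  -- power series
  have hps : ∀ ζ ∈ sphere (0:ℂ) 1, HasFPowerSeriesOnBall (fun z => Λ (ζ, z))
      (cauchyPowerSeries (fun z => Λ (ζ, z)) 0 ρ) 0 ρ' := by
    intro ζ hζ
    have hdiff : DifferentiableOn ℂ (fun z => Λ (ζ, z)) (ball 0 1) := by
      refine ((hlam ζ hζ).2.1).congr (fun z hz => ?_)
      exact hΛK (ζ, z) ⟨hζ, ball_subset_closedBall hz⟩
    have hsub : closedBall (0:ℂ) ρ ⊆ ball 0 1 := closedBall_subset_ball hρ1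
    have := (hdiff.mono hsub).hasFPowerSeriesOnBall (R := ρ') (by exact_mod_cast hρ0)
    exact this
  set c : ℂ → ℕ → EuclideanSpace ℂ (Fin n) := fun ζ k =>
    (cauchyPowerSeries (fun z => Λ (ζ, z)) 0 ρ k) (fun _ => 1) with hcdef
  have hc0 : ∀ ζ ∈ sphere (0:ℂ) 1, c ζ 0 = 0 := by
    intro ζ hζ
    have h1 := (hps ζ hζ).coeff_zero (fun _ => 1)
    have h2 : (ζ, (0:ℂ)) ∈ K := ⟨hζ, by simp⟩
    rw [hcdef]
    simp only []
    rw [h1, hΛK (ζ, 0) h2, (hlam ζ hζ).2.2]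
  have hcb : ∀ ζ ∈ sphere (0:ℂ) 1, ∀ k, ‖c ζ k‖ ≤ M * (ρ⁻¹)^k := by
    intro ζ hζ k
    have hop : ‖c ζ k‖ ≤ ‖cauchyPowerSeries (fun z => Λ (ζ, z)) 0 ρ k‖ := by
      have h3 := (cauchyPowerSeries (fun z => Λ (ζ, z)) 0 ρ k).le_opNorm (fun _ => (1:ℂ))
      simp only [norm_one, Finset.prod_const_one, mul_one] at h3
      exact h3
    have hint : (∫ θ in (0:ℝ)..2*Real.pi, ‖Λ (ζ, circleMap 0 ρ θ)‖) ≤ 2 * Real.pi * M := by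
      have hmono : ∀ θ ∈ Icc (0:ℝ) (2*Real.pi), ‖Λ (ζ, circleMap 0 ρ θ)‖ ≤ M := by
        intro θ _
        have hmem : (ζ, circleMap 0 ρ θ) ∈ K := by
          refine ⟨hζ, ?_⟩
          simp only [mem_closedBall, Complex.dist_eq, sub_zero]
          rw [norm_circleMap_zero]
          rw [_root_.abs_of_pos hρ0]
          exact hρ1.le
        rw [hΛK _ hmem]
        exact hM _ hmem
      calc (∫ θ in (0:ℝ)..2*Real.pi, ‖Λ (ζ, circleMap 0 ρ θ)‖)
          ≤ ∫ _θ in (0:ℝ)..2*Real.pi, M := by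
            apply intervalIntegral.integral_mono_on Real.two_pi_pos.le
            · exact (Λ.continuous.comp (continuous_const.prodMk
                (continuous_circleMap 0 ρ))).norm.intervalIntegrable _ _
            · exact intervalIntegrable_const
            · exact hmono
        _ = 2 * Real.pi * M := by simp [mul_comm]
    calc ‖c ζ k‖ ≤ ‖cauchyPowerSeries (fun z => Λ (ζ, z)) 0 ρ k‖ := hop
      _ ≤ ((2 * Real.pi)⁻¹ * ∫ θ in (0:ℝ)..2*Real.pi, ‖Λ (ζ, circleMap 0 ρ θ)‖) * |ρ|⁻¹^k :=
          norm_cauchyPowerSeries_le _ _ _ _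
      _ ≤ M * (ρ⁻¹)^k := by
          rw [_root_.abs_of_pos hρ0]
          have h2π : (0:ℝ) < 2 * Real.pi := Real.two_pi_pos
          have : (2 * Real.pi)⁻¹ * (∫ θ in (0:ℝ)..2*Real.pi, ‖Λ (ζ, circleMap 0 ρ θ)‖) ≤ M := by
            rw [inv_mul_le_iff₀ h2π]
            linarith [hint]
          apply mul_le_mul_of_nonneg_right this
          positivity
  have hccont : ∀ k, Continuous fun ζ => c ζ k := fun k => cauchyCoeff_continuous Λ hρ0 k
  -- choose truncation L
  set s : ℝ := r / ρ with hsdef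
  have hs0 : 0 ≤ s := by positivity
  have hs1 : s < 1 := (div_lt_one hρ0).mpr hρr
  obtain ⟨L, hL1, hLtail⟩ : ∃ L : ℕ, 1 ≤ L ∧ M * s^(L+1) * (1-s)⁻¹ < ε/4 := by
    have htend : Filter.Tendsto (fun L : ℕ => M * s^L * (1-s)⁻¹) Filter.atTop (nhds 0) := by
      have h1 := tendsto_pow_atTop_nhds_zero_of_lt_one hs0 hs1
      have h2 := (h1.const_mul M).mul_const (1-s)⁻¹
      simpa using h2
    have hev := htend.eventually (gt_mem_nhds (show (0:ℝ) < ε/4 by positivity))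
    rw [Filter.eventually_atTop] at hev
    obtain ⟨L0, hL0⟩ := hev
    exact ⟨max L0 1, le_max_right _ _,
      hL0 _ (le_trans (le_max_left _ _) (Nat.le_succ _))⟩
  have hLpos : 0 < L := hL1
  -- coefficient functions on the circle
  set δ₁ : ℝ := ε / (4 * L * n) with hδ₁def
  have hδ₁0 : 0 < δ₁ := by
    rw [hδ₁def]
    have : (0:ℝ) < L := by exact_mod_cast hLpos
    have : (0:ℝ) < n := by exact_mod_cast hn'
    positivity
  have hgcont : ∀ (j : Fin L) (i : Fin n),
      Continuous (fun ζ : sphere (0:ℂ) 1 =>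
        ((r:ℂ)^((j:ℕ)+1) • c (ζ:ℂ) ((j:ℕ)+1)) i) := by
    intro j i
    have h1 : Continuous fun ζ : sphere (0:ℂ) 1 => c (ζ:ℂ) ((j:ℕ)+1) :=
      (hccont _).comp continuous_subtype_val
    have h2 : Continuous fun ζ : sphere (0:ℂ) 1 => ((r:ℂ)^((j:ℕ)+1) • c (ζ:ℂ) ((j:ℕ)+1)) :=
      (continuous_const_smul _).comp h1
    exact (PiLp.continuous_apply 2 _ i).comp h2
  choose mm qq hqq using fun (j : Fin L) (i : Fin n) =>
    laurent_approx ⟨_, hgcont j i⟩ hδ₁0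
  set m : ℕ := Finset.univ.sup (fun ji : Fin L × Fin n => mm ji.1 ji.2) with hmdef
  have hmle : ∀ (j : Fin L) (i : Fin n), mm j i ≤ m :=
    fun j i => Finset.le_sup (f := fun ji : Fin L × Fin n => mm ji.1 ji.2) (Finset.mem_univ (j, i))
  set A : Fin L → ℂ → EuclideanSpace ℂ (Fin n) := fun j ζ =>
    WithLp.toLp 2 (fun i => (Polynomial.X^(m - mm j i) * qq j i).eval ζ) with hAdef
  refine ⟨m, L, hL1, A, fun j i => ⟨Polynomial.X^(m - mm j i) * qq j i, fun ζ => rfl⟩, ?_⟩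
  intro ζ hζ z hz
  have hζ0 : ζ ≠ 0 := sphere_ne_zero ⟨ζ, hζ⟩
  have hz1 : ‖z‖ ≤ 1 := by simpa [Complex.dist_eq] using hz
  set w : ℂ := (r:ℂ) * z with hwdef
  have hwr : ‖w‖ ≤ r := by
    rw [hwdef, norm_mul, Complex.norm_real, Real.norm_eq_abs, _root_.abs_of_pos hr0]
    calc r * ‖z‖ ≤ r * 1 := by gcongr
      _ = r := mul_one r
  have hwK : (ζ, w) ∈ K := by
    refine ⟨hζ, ?_⟩
    rw [mem_closedBall, Complex.dist_eq, sub_zero]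
    calc ‖w‖ = ‖w‖ := rfl
      _ ≤ r := hwr
      _ ≤ 1 := hr1.le
  -- Step 1 : dilation error
  have hstep1 : ‖lam (ζ, z) - lam (ζ, w)‖ < ε/4 := by
    have hzw : ‖z - w‖ ≤ 1 - r := by
      have h6 : z - w = ((1 - r : ℝ) : ℂ) * z := by push_cast; rw [hwdef]; ring
      rw [h6, norm_mul, Complex.norm_real, Real.norm_eq_abs,
        _root_.abs_of_nonneg (by linarith : (0:ℝ) ≤ 1 - r)]
      calc (1 - r) * ‖z‖ ≤ (1 - r) * 1 := by gcongr
        _ = 1 - r := mul_one _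
    have hd : dist ((ζ,z) : ℂ × ℂ) (ζ,w) < δ₀ := by
      rw [Prod.dist_eq]
      have h7 : dist ζ ζ = 0 := dist_self ζ
      have h8 : dist z w ≤ 1 - r := by rw [dist_eq_norm]; exact hzw
      have : max (dist ζ ζ) (dist z w) ≤ 1 - r := by
        rw [h7]; exact max_le (by linarith) h8
      calc max (dist ζ ζ) (dist z w) ≤ 1 - r := this
        _ ≤ δ₀ / 2 := hrδ
        _ < δ₀ := by linarith
    have h9 := hδ (ζ,z) ⟨hζ, hz⟩ (ζ,w) hwK hd
    rwa [dist_eq_norm] at h9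
  -- Step 2 : power series sum
  have hwρ : ‖w‖ < ρ := lt_of_le_of_lt hwr hρr
  have hmemball : w ∈ EMetric.ball (0:ℂ) ρ' := by
    show w ∈ Metric.eball (0:ℂ) ρ'
    rw [Metric.emetric_ball_nnreal]
    exact mem_ball_zero_iff.mpr hwρ
  have h1 := (hps ζ hζ).hasSum hmemball
  have hterm : ∀ k, ((cauchyPowerSeries (fun z => Λ (ζ, z)) 0 ρ k) fun _ => w)
      = w^k • c ζ k := by
    intro k
    have h2 := (cauchyPowerSeries (fun z => Λ (ζ, z)) 0 ρ k).map_smul_univ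
      (fun _ => w) (fun _ => (1:ℂ))
    simp only [smul_eq_mul, mul_one, Finset.prod_const, Finset.card_univ,
      Fintype.card_fin] at h2
    exact h2
  have hsum : HasSum (fun k => w^k • c ζ k) (lam (ζ, w)) := by
    simp only [hterm, zero_add] at h1
    rwa [hΛK (ζ, w) hwK] at h1
  -- Step 3 : tail bound
  have htail : ‖lam (ζ, w) - ∑ k ∈ Finset.range (L+1), w^k • c ζ k‖
      ≤ M * s^(L+1) * (1-s)⁻¹ := by
    apply geom_tail_bound hsum hs0 hs1 ?_ (L+1)
    intro k
    rw [norm_smul, norm_pow]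
    calc ‖w‖^k * ‖c ζ k‖ ≤ r^k * (M * (ρ⁻¹)^k) :=
          mul_le_mul (pow_le_pow_left₀ (norm_nonneg _) hwr k) (hcb ζ hζ k)
            (norm_nonneg _) (by positivity)
      _ = M * s^k := by rw [hsdef, div_eq_mul_inv, mul_pow]; ring
  -- Step 4 : reindex the partial sum
  have hsplit : ∑ k ∈ Finset.range (L+1), w^k • c ζ k
      = ∑ j : Fin L, z^((j:ℕ)+1) • ((r:ℂ)^((j:ℕ)+1) • c ζ ((j:ℕ)+1)) := by
    rw [Finset.sum_range_succ']
    rw [pow_zero, one_smul, hc0 ζ hζ, add_zero]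
    rw [← Fin.sum_univ_eq_sum_range (fun j => w^(j+1) • c ζ (j+1)) L]
    apply Finset.sum_congr rfl
    intro j _
    rw [hwdef, mul_pow, mul_comm ((r:ℂ)^((j:ℕ)+1)), mul_smul]
  -- Step 5 : coefficient approximation
  have happrox : ∀ j : Fin L,
      ‖(r:ℂ)^((j:ℕ)+1) • c ζ ((j:ℕ)+1) - (ζ⁻¹^m) • A j ζ‖ < n * δ₁ := by
    intro j
    apply euclid_norm_lt hn'
    intro i
    have hq := hqq j i ⟨ζ, hζ⟩
    have hk := hmle j i
    have hpow : ζ⁻¹^m * ζ^(m - mm j i) = ζ⁻¹^(mm j i) := by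
      rw [inv_pow, inv_pow, inv_mul_eq_div, div_eq_iff (pow_ne_zero m hζ0), inv_mul_eq_div,
        eq_div_iff (pow_ne_zero (mm j i) hζ0), ← pow_add, Nat.sub_add_cancel hk]
    have hAi : (A j ζ) i = ζ^(m - mm j i) * (qq j i).eval ζ := by
      rw [hAdef]
      simp [Polynomial.eval_mul, Polynomial.eval_pow]
    have hcoord : ((r:ℂ)^((j:ℕ)+1) • c ζ ((j:ℕ)+1) - (ζ⁻¹^m) • A j ζ) i
        = ((r:ℂ)^((j:ℕ)+1) • c ζ ((j:ℕ)+1)) i - (ζ⁻¹)^(mm j i) * (qq j i).eval ζ := by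
      rw [PiLp.sub_apply, PiLp.smul_apply, PiLp.smul_apply, hAi, smul_eq_mul, smul_eq_mul, ← mul_assoc, hpow]
    rw [hcoord]
    exact hq
  -- Step 6 : assemble
  set Q := (ζ⁻¹ ^ m) • ∑ j : Fin L, z ^ ((j:ℕ) + 1) • A j ζ with hQdef
  set P := ∑ k ∈ Finset.range (L+1), w^k • c ζ k with hPdef
  have hQ : Q = ∑ j : Fin L, z^((j:ℕ)+1) • ((ζ⁻¹^m) • A j ζ) := by
    rw [hQdef, Finset.smul_sum]
    exact Finset.sum_congr rfl fun j _ => smul_comm _ _ _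
  have hPQ : ‖P - Q‖ < ε/4 := by
    rw [hsplit, hQ, ← Finset.sum_sub_distrib]
    have hterm2 : ∀ j : Fin L,
        ‖z^((j:ℕ)+1) • ((r:ℂ)^((j:ℕ)+1) • c ζ ((j:ℕ)+1))
          - z^((j:ℕ)+1) • ((ζ⁻¹^m) • A j ζ)‖ < n * δ₁ := by
      intro j
      rw [← smul_sub, norm_smul, norm_pow]
      apply lt_of_le_of_lt ?_ (happrox j)
      calc ‖z‖^((j:ℕ)+1) * ‖(r:ℂ)^((j:ℕ)+1) • c ζ ((j:ℕ)+1) - (ζ⁻¹^m) • A j ζ‖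
          ≤ 1 * ‖(r:ℂ)^((j:ℕ)+1) • c ζ ((j:ℕ)+1) - (ζ⁻¹^m) • A j ζ‖ := by
            apply mul_le_mul_of_nonneg_right _ (norm_nonneg _)
            exact pow_le_one₀ (norm_nonneg _) hz1
        _ = _ := one_mul _
    calc ‖∑ j : Fin L, (z^((j:ℕ)+1) • ((r:ℂ)^((j:ℕ)+1) • c ζ ((j:ℕ)+1))
            - z^((j:ℕ)+1) • ((ζ⁻¹^m) • A j ζ))‖
        ≤ ∑ j : Fin L, ‖z^((j:ℕ)+1) • ((r:ℂ)^((j:ℕ)+1) • c ζ ((j:ℕ)+1))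
            - z^((j:ℕ)+1) • ((ζ⁻¹^m) • A j ζ)‖ := norm_sum_le _ _
      _ < ∑ _j : Fin L, (n * δ₁) := by
          apply Finset.sum_lt_sum_of_nonempty
          · exact Finset.univ_nonempty_iff.mpr ⟨⟨0, hLpos⟩⟩
          · exact fun j _ => hterm2 j
      _ = L * (n * δ₁) := by
          rw [Finset.sum_const, Finset.card_univ, Fintype.card_fin, nsmul_eq_mul]
      _ = ε/4 := by
          rw [hδ₁def]
          have hL0 : (L:ℝ) ≠ 0 := by exact_mod_cast hLpos.ne'
          have hn0 : (n:ℝ) ≠ 0 := by exact_mod_cast hn'.ne'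
          field_simp
  have htail' : ‖lam (ζ, w) - P‖ < ε/4 := lt_of_le_of_lt htail hLtail
  have hdecomp : lam (ζ, z) - Q
      = (lam (ζ,z) - lam (ζ,w)) + ((lam (ζ,w) - P) + (P - Q)) := by abel
  calc ‖lam (ζ, z) - Q‖
      = ‖(lam (ζ,z) - lam (ζ,w)) + ((lam (ζ,w) - P) + (P - Q))‖ := by rw [hdecomp]
    _ ≤ ‖lam (ζ,z) - lam (ζ,w)‖ + (‖lam (ζ,w) - P‖ + ‖P - Q‖) :=
        (norm_add_le _ _).trans (by gcongr; exact norm_add_le _ _)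
    _ < ε/4 + (ε/4 + ε/4) := by
        apply add_lt_add hstep1
        exact add_lt_add htail' hPQ
    _ < ε := by linarith
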